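/- Let u(x) := Σ_{j=1}^{∞} i_j(x)·4^{−j} on [0,1)². For every n ≥ 1 and every (i₁,…,i_n) ∈ {0,1,2,3}ⁿ, put s := Σ_{j=1}^{n} i_j·4^{−j}. Then the symmetric difference of the sets { x ∈ [0,1)² : s < u(x) < s + 4^{−n} } and Q_{i₁,…,i_n} is a Lebesgue-null subset of ℝ². -/

import Mathlib

open MeasureTheory Set Filter
open scoped ENNReal NNReal

noncomputable section

/-- The half-open unit square `[0,1)²` in `ℝ²`. -/
def unitSq : Set (ℝ × ℝ) := Set.Ico (0:ℝ) 1 ×ˢ Set.Ico (0:ℝ) 1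

/-- The four contractions `B₀, B₁, B₂, B₃` mapping `[0,1)²` onto its four half-open
dyadic subsquares (lower-left, lower-right, upper-left, upper-right). -/
def Bmap (i : Fin 4) (x : ℝ × ℝ) : ℝ × ℝ :=
  (x.1 / 2 + (if i.val % 2 = 1 then (1:ℝ)/2 else 0),
   x.2 / 2 + (if 2 ≤ i.val then (1:ℝ)/2 else 0))

/-- The inverse maps `A₀, A₁, A₂, A₃` of `B₀, …, B₃`. -/
def Amap (i : Fin 4) (x : ℝ × ℝ) : ℝ × ℝ :=
  (2 * x.1 - (if i.val % 2 = 1 then (1:ℝ) else 0),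
   2 * x.2 - (if 2 ≤ i.val then (1:ℝ) else 0))

/-- The four half-open dyadic subsquares `Q₀, Q₁, Q₂, Q₃` of `[0,1)²`. -/
def Qsub (i : Fin 4) : Set (ℝ × ℝ) := Bmap i '' unitSq

/-- The step function `ū = Σ_{i=0}^{3} (i/4)·1_{Q_i}`. -/
def ubar (x : ℝ × ℝ) : ℝ :=
  ∑ i : Fin 4, ((i.val : ℝ) / 4) * (Qsub i).indicator (fun _ => (1:ℝ)) x

/-- The operator `L`: `(Lv)(x) = ū(x) + (1/4) Σ_i v(A_i x)·1_{Q_i}(x)` on `[0,1)²`,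
extended by `0` outside. -/
def Lop (v : ℝ × ℝ → ℝ) : ℝ × ℝ → ℝ :=
  unitSq.indicator fun x =>
    ubar x + (1/4) * ∑ i : Fin 4, (Qsub i).indicator (fun y => v (Amap i y)) x

/-- The `j`-th binary digit `a_j(s) = ⌊2^j s⌋ − 2⌊2^{j−1} s⌋` of `s ∈ [0,1)` (`j ≥ 1`). -/
def bdigit (j : ℕ) (s : ℝ) : ℤ := ⌊(2:ℝ)^j * s⌋ - 2 * ⌊(2:ℝ)^(j-1) * s⌋

/-- The `j`-th quadrant digit `i_j(x) = a_j(x₁) + 2 a_j(x₂) ∈ {0,1,2,3}` of `x ∈ [0,1)²`. -/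
def qdigit (j : ℕ) (x : ℝ × ℝ) : ℤ := bdigit j x.1 + 2 * bdigit j x.2

/-- The Flat Mountain function `u(x) = Σ_{j≥1} i_j(x)·4^{−j}` on `[0,1)²`, `0` outside. -/
def uFM : ℝ × ℝ → ℝ :=
  unitSq.indicator fun x => ∑' j : ℕ, (qdigit (j+1) x : ℝ) / 4^(j+1)

/-- The iterates `u₀ = 0`, `u_{n+1} = L u_n`. -/
def uIter : ℕ → ℝ × ℝ → ℝ
  | 0 => fun _ => 0
  | (n+1) => Lop (uIter n)

/-- The dyadic square `Q_{i₁,…,i_n} = B_{i₁} ∘ ⋯ ∘ B_{i_n} ([0,1)²)` indexed by a finite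
sequence of quadrant digits. -/
def Qseq : List (Fin 4) → Set (ℝ × ℝ)
  | [] => unitSq
  | (i :: l) => Bmap i '' Qseq l

/-- The `j`-th base-4 digit `t_j = ⌊4^j t⌋ − 4⌊4^{j−1} t⌋` of `t ∈ [0,1)` (`j ≥ 1`). -/
def tdigit (j : ℕ) (t : ℝ) : ℤ := ⌊(4:ℝ)^j * t⌋ - 4 * ⌊(4:ℝ)^(j-1) * t⌋

/-- The Lebesgue (Z-order) space-filling curve `γ`. -/
def lcurve (t : ℝ) : ℝ × ℝ :=
  (∑' j : ℕ, ((tdigit (j+1) t % 2 : ℤ) : ℝ) / 2^(j+1),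
   ∑' j : ℕ, ((tdigit (j+1) t / 2 : ℤ) : ℝ) / 2^(j+1))

section Aux
open Set

lemma bdigit_succ (j : ℕ) (s : ℝ) :
    bdigit (j+1) s = ⌊2*((2:ℝ)^j*s)⌋ - 2*⌊(2:ℝ)^j*s⌋ := by
  have h : (2:ℝ)^(j+1)*s = 2*((2:ℝ)^j*s) := by ring
  rw [bdigit, Nat.add_sub_cancel, h]

lemma bdigit_cases (j : ℕ) (s : ℝ) : bdigit (j+1) s = 0 ∨ bdigit (j+1) s = 1 := by
  rw [bdigit_succ]
  set y := (2:ℝ)^j * s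
  have h1 : 2*⌊y⌋ ≤ ⌊2*y⌋ := by
    rw [Int.le_floor]
    push_cast
    nlinarith [Int.floor_le y]
  have h2 : ⌊2*y⌋ < 2*⌊y⌋ + 2 := by
    rw [Int.floor_lt]
    push_cast
    nlinarith [Int.lt_floor_add_one y]
  omega

lemma floor_succ_eq (j : ℕ) (s : ℝ) :
    ⌊(2:ℝ)^(j+1)*s⌋ = 2*⌊(2:ℝ)^j*s⌋ + bdigit (j+1) s := by
  rw [bdigit_succ]
  have : (2:ℝ)^(j+1)*s = 2*((2:ℝ)^j*s) := by ring
  rw [this]; ring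

lemma qdigit_nonneg (j : ℕ) (x : ℝ × ℝ) : 0 ≤ qdigit (j+1) x := by
  unfold qdigit
  rcases bdigit_cases j x.1 with h|h <;> rcases bdigit_cases j x.2 with h'|h' <;> omega

lemma qdigit_le_three (j : ℕ) (x : ℝ × ℝ) : qdigit (j+1) x ≤ 3 := by
  unfold qdigit
  rcases bdigit_cases j x.1 with h|h <;> rcases bdigit_cases j x.2 with h'|h' <;> omega

lemma Amap_Bmap (i : Fin 4) (y : ℝ × ℝ) : Amap i (Bmap i y) = y := by
  unfold Amap Bmap
  split <;> split <;> simp <;> ring_nf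

lemma Bmap_Amap (i : Fin 4) (x : ℝ × ℝ) : Bmap i (Amap i x) = x := by
  unfold Amap Bmap
  split <;> split <;> simp <;> ring_nf

lemma mem_Bmap_image (i : Fin 4) (S : Set (ℝ × ℝ)) (x : ℝ × ℝ) :
    x ∈ Bmap i '' S ↔ Amap i x ∈ S := by
  constructor
  · rintro ⟨y, hy, rfl⟩; rwa [Amap_Bmap]
  · intro h; exact ⟨Amap i x, h, Bmap_Amap i x⟩

end Aux
section Aux2
open Set

lemma bdigit_one_eq (t : ℝ) (ht : t ∈ Ico (0:ℝ) 1) : bdigit 1 t = ⌊2*t⌋ := by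
  have h0 : ⌊t⌋ = 0 := Int.floor_eq_zero_iff.mpr ht
  have := bdigit_succ 0 t
  simp only [pow_zero, one_mul] at this
  rw [this, h0]; ring

lemma bdigit_shift (y : ℝ) (c : ℤ) (j : ℕ) :
    bdigit (j+2) y = bdigit (j+1) (2*y - c) := by
  rw [bdigit_succ, bdigit_succ]
  have e1 : (2:ℝ)*((2:ℝ)^j*(2*y - c)) = 2*((2:ℝ)^(j+1)*y) - (2^(j+1)*c : ℤ) := by
    push_cast; ring
  have e2 : (2:ℝ)^j*(2*y - c) = (2:ℝ)^(j+1)*y - (2^j*c : ℤ) := by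
    push_cast; ring
  rw [e1, e2, Int.floor_sub_intCast, Int.floor_sub_intCast]
  push_cast
  ring

/-- The integer offsets of `Amap i`. -/
def coff1 (i : Fin 4) : ℤ := if i.val % 2 = 1 then 1 else 0
def coff2 (i : Fin 4) : ℤ := if 2 ≤ i.val then 1 else 0

lemma Amap_eq (i : Fin 4) (x : ℝ × ℝ) :
    Amap i x = (2*x.1 - (coff1 i : ℝ), 2*x.2 - (coff2 i : ℝ)) := by
  unfold Amap coff1 coff2
  split <;> split <;> simp

lemma qdigit_shift (i : Fin 4) (x : ℝ × ℝ) (j : ℕ) :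
    qdigit (j+2) x = qdigit (j+1) (Amap i x) := by
  rw [Amap_eq]
  unfold qdigit
  rw [bdigit_shift x.1 (coff1 i) j, bdigit_shift x.2 (coff2 i) j]

lemma coff_eq (i : Fin 4) : (coff1 i) + 2 * (coff2 i) = i.val := by
  fin_cases i <;> simp [coff1, coff2]

lemma qdigit_one_of_mem (i : Fin 4) (x : ℝ × ℝ) (hx : Amap i x ∈ unitSq) :
    qdigit 1 x = i.val := by
  rw [Amap_eq] at hx
  obtain ⟨⟨h1, h2⟩, ⟨h3, h4⟩⟩ := hx
  simp only at h1 h2 h3 h4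
  have hx1 : x.1 ∈ Ico (0:ℝ) 1 := by
    constructor
    · have : (0:ℝ) ≤ coff1 i := by unfold coff1; split <;> norm_num
      linarith
    · have : (coff1 i : ℝ) ≤ 1 := by unfold coff1; split <;> norm_num
      linarith
  have hx2 : x.2 ∈ Ico (0:ℝ) 1 := by
    constructor
    · have : (0:ℝ) ≤ coff2 i := by unfold coff2; split <;> norm_num
      linarith
    · have : (coff2 i : ℝ) ≤ 1 := by unfold coff2; split <;> norm_num
      linarith
  have f1 : ⌊2*x.1⌋ = coff1 i := by
    rw [Int.floor_eq_iff] <;> push_cast <;> constructor <;> linarith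
  have f2 : ⌊2*x.2⌋ = coff2 i := by
    rw [Int.floor_eq_iff] <;> constructor <;> push_cast <;> linarith
  unfold qdigit
  rw [bdigit_one_eq x.1 hx1, bdigit_one_eq x.2 hx2, f1, f2, coff_eq]

lemma Amap_mem_unitSq (i : Fin 4) (x : ℝ × ℝ) (hx : x ∈ unitSq)
    (h : qdigit 1 x = i.val) : Amap i x ∈ unitSq := by
  obtain ⟨hx1, hx2⟩ := hx
  have b1 := bdigit_cases 0 x.1
  have b2 := bdigit_cases 0 x.2
  rw [show (0+1 : ℕ) = 1 from rfl, bdigit_one_eq x.1 hx1] at b1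
  rw [show (0+1 : ℕ) = 1 from rfl, bdigit_one_eq x.2 hx2] at b2
  unfold qdigit at h
  rw [bdigit_one_eq x.1 hx1, bdigit_one_eq x.2 hx2] at h
  have hc1 : (coff1 i : ℤ) = (i.val : ℤ) % 2 := by fin_cases i <;> decide
  have hc2 : (coff2 i : ℤ) = (i.val : ℤ) / 2 := by fin_cases i <;> decide
  have f1 : ⌊2*x.1⌋ = coff1 i := by rw [hc1]; omega
  have f2 : ⌊2*x.2⌋ = coff2 i := by rw [hc2]; omega
  have g1 := Int.floor_le (2*x.1)
  have g2 := Int.lt_floor_add_one (2*x.1)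
  have g3 := Int.floor_le (2*x.2)
  have g4 := Int.lt_floor_add_one (2*x.2)
  rw [f1] at g1 g2
  rw [f2] at g3 g4
  rw [Amap_eq]
  refine ⟨⟨?_, ?_⟩, ?_, ?_⟩ <;> simp only <;> linarith

lemma Bmap_mem (i : Fin 4) (y : ℝ × ℝ) (hy : y ∈ unitSq) : Bmap i y ∈ unitSq := by
  obtain ⟨⟨h1, h2⟩, h3, h4⟩ := hy
  refine ⟨⟨?_, ?_⟩, ?_, ?_⟩ <;> unfold Bmap <;> simp only <;> split <;> norm_num <;> linarith

lemma Qseq_subset (l : List (Fin 4)) : Qseq l ⊆ unitSq := by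
  induction l with
  | nil => exact fun x h => h
  | cons i l ih =>
    rintro x ⟨y, hy, rfl⟩
    exact Bmap_mem i y (ih hy)

lemma mem_Qseq_iff (l : List (Fin 4)) (x : ℝ × ℝ) :
    x ∈ Qseq l ↔ x ∈ unitSq ∧ ∀ j (h : j < l.length), qdigit (j+1) x = ((l.get ⟨j, h⟩).val : ℤ) := by
  induction l generalizing x with
  | nil => simp [Qseq]
  | cons i l ih =>
    constructor
    · intro hx
      have hx' : Amap i x ∈ Qseq l := (mem_Bmap_image i _ x).mp hx
      have hxu : x ∈ unitSq := Qseq_subset (i :: l) hx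
      have hAu : Amap i x ∈ unitSq := Qseq_subset l hx'
      refine ⟨hxu, ?_⟩
      intro j hj
      match j with
      | 0 => exact qdigit_one_of_mem i x hAu
      | (j+1) =>
        rw [qdigit_shift i x j]
        exact ((ih (Amap i x)).mp hx').2 j (by simp only [List.length_cons] at hj; omega)
    · rintro ⟨hxu, hd⟩
      have h1 : qdigit 1 x = i.val := hd 0 (by simp)
      have hA : Amap i x ∈ unitSq := Amap_mem_unitSq i x hxu h1
      show x ∈ Bmap i '' Qseq l
      rw [mem_Bmap_image]
      rw [ih]
      refine ⟨hA, ?_⟩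
      intro j hj
      rw [← qdigit_shift i x j]
      exact hd (j+1) (by simp only [List.length_cons]; omega)

end Aux2
section Aux3
open Set MeasureTheory

lemma summable_three (m : ℕ) : Summable (fun j : ℕ => (3:ℝ) / 4^(j+m+1)) := by
  have h4 : |(1:ℝ)/4| < 1 := by rw [abs_lt]; norm_num
  have hg := summable_geometric_of_abs_lt_one h4
  have := hg.mul_left (3 / (4:ℝ)^(m+1))
  apply this.congr
  intro j
  rw [div_pow]
  field_simp
  ring

lemma summable_qd (x : ℝ × ℝ) (m : ℕ) :
    Summable (fun j : ℕ => (qdigit (j+m+1) x : ℝ) / 4^(j+m+1)) := by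
  refine Summable.of_nonneg_of_le ?_ ?_ (summable_three m)
  · intro j
    apply div_nonneg
    · exact_mod_cast qdigit_nonneg (j+m) x
    · positivity
  · intro j
    apply div_le_div_of_nonneg_right ?_ (by positivity)
    · exact_mod_cast qdigit_le_three (j+m) x

lemma tsum_three (m : ℕ) : ∑' j : ℕ, (3:ℝ) / 4^(j+m+1) = 1 / 4^m := by
  have h4 : |(1:ℝ)/4| < 1 := by rw [abs_lt]; norm_num
  have hgeo := tsum_geometric_of_abs_lt_one h4
  calc ∑' j : ℕ, (3:ℝ) / 4^(j+m+1)
      = ∑' j : ℕ, (3 / 4^(m+1)) * (1/4)^j := by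
        congr 1; funext j
        rw [div_pow]
        field_simp
        ring
    _ = (3 / 4^(m+1)) * ∑' j : ℕ, ((1:ℝ)/4)^j := tsum_mul_left
    _ = (3 / 4^(m+1)) * (1 - 1/4)⁻¹ := by rw [hgeo]
    _ = 1 / 4^m := by
        rw [pow_succ]
        norm_num
        ring

lemma tail_nonneg (x : ℝ × ℝ) (m : ℕ) :
    0 ≤ ∑' j : ℕ, (qdigit (j+m+1) x : ℝ) / 4^(j+m+1) := by
  apply tsum_nonneg
  intro j
  apply div_nonneg
  · exact_mod_cast qdigit_nonneg (j+m) x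
  · positivity

lemma tail_le (x : ℝ × ℝ) (m : ℕ) :
    ∑' j : ℕ, (qdigit (j+m+1) x : ℝ) / 4^(j+m+1) ≤ 1 / 4^m := by
  rw [← tsum_three m]
  apply Summable.tsum_le_tsum ?_ (summable_qd x m) (summable_three m)
  intro j
  apply div_le_div_of_nonneg_right ?_ (by positivity)
  exact_mod_cast qdigit_le_three (j+m) x

end Aux3
section Aux4
open Set MeasureTheory

lemma dyadic_of_zero (t : ℝ) (n : ℕ) (h : ∀ j : ℕ, bdigit (n+j+1) t = 0) :
    ∃ k : ℤ, (2:ℝ)^n * t = k := by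
  set c := ⌊(2:ℝ)^n * t⌋ with hc
  have key : ∀ j : ℕ, ⌊(2:ℝ)^(n+j) * t⌋ = 2^j * c := by
    intro j
    induction j with
    | zero => simp [hc]
    | succ j ih =>
      have := floor_succ_eq (n+j) t
      rw [h j] at this
      rw [show n + (j+1) = (n+j)+1 from rfl, this, ih]
      ring
  refine ⟨c, le_antisymm ?_ (Int.floor_le _)⟩
  apply le_of_forall_pos_le_add
  intro ε hε
  obtain ⟨j, hj⟩ := exists_pow_lt_of_lt_one hε (by norm_num : (1:ℝ)/2 < 1)
  have h1 : ((2:ℤ)^j * c : ℝ) ≤ (2:ℝ)^(n+j) * t := by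
    have := Int.floor_le ((2:ℝ)^(n+j) * t)
    rw [key j] at this
    exact_mod_cast this
  have h2 : (2:ℝ)^(n+j) * t < (2^j * c : ℤ) + 1 := by
    have := Int.lt_floor_add_one ((2:ℝ)^(n+j) * t)
    rw [key j] at this
    exact_mod_cast this
  have hp : (0:ℝ) < (2:ℝ)^j := by positivity
  rw [pow_add] at h2
  push_cast at h2 ⊢
  have h3 : (2:ℝ)^n * t ≤ c + ((1:ℝ)/2)^j := by
    rw [div_pow, one_pow]
    rw [show (2:ℝ)^n * (2:ℝ)^j * t = ((2:ℝ)^n * t) * (2:ℝ)^j by ring] at h2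
    rw [← lt_div_iff₀ hp] at h2
    have : ((2:ℝ)^j * c + 1)/(2:ℝ)^j = c + 1/(2:ℝ)^j := by field_simp
    rw [this] at h2
    linarith
  linarith

lemma dyadic_of_one (t : ℝ) (n : ℕ) (h : ∀ j : ℕ, bdigit (n+j+1) t = 1) :
    ∃ k : ℤ, (2:ℝ)^n * t = k := by
  set c := ⌊(2:ℝ)^n * t⌋ with hc
  have key : ∀ j : ℕ, ⌊(2:ℝ)^(n+j) * t⌋ = 2^j * (c+1) - 1 := by
    intro j
    induction j with
    | zero => simp [hc]
    | succ j ih =>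
      have := floor_succ_eq (n+j) t
      rw [h j] at this
      rw [show n + (j+1) = (n+j)+1 from rfl, this, ih]
      ring
  have hub : (2:ℝ)^n * t < (c:ℝ) + 1 := Int.lt_floor_add_one _
  refine ⟨c + 1, le_antisymm (by push_cast; linarith) ?_⟩
  apply le_of_forall_pos_le_add
  intro ε hε
  obtain ⟨j, hj⟩ := exists_pow_lt_of_lt_one hε (by norm_num : (1:ℝ)/2 < 1)
  have h1 : ((2:ℤ)^j * (c+1) - 1 : ℝ) ≤ (2:ℝ)^(n+j) * t := by
    have := Int.floor_le ((2:ℝ)^(n+j) * t)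
    rw [key j] at this
    exact_mod_cast this
  have hp : (0:ℝ) < (2:ℝ)^j := by positivity
  rw [pow_add] at h1
  push_cast at h1 ⊢
  have h3 : (c:ℝ) + 1 - ((1:ℝ)/2)^j ≤ (2:ℝ)^n * t := by
    rw [div_pow, one_pow]
    rw [show (2:ℝ)^n * (2:ℝ)^j * t = ((2:ℝ)^n * t) * (2:ℝ)^j by ring] at h1
    rw [show (2:ℝ)^j * ((c:ℝ)+1) - 1 = ((c:ℝ) + 1 - 1/(2:ℝ)^j) * (2:ℝ)^j by field_simp] at h1
    exact (mul_le_mul_iff_left₀ hp).mp h1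
  linarith

lemma null_dyadic (n : ℕ) : volume {x : ℝ × ℝ | ∃ k : ℤ, (2:ℝ)^n * x.1 = k} = 0 := by
  have hsub : {x : ℝ × ℝ | ∃ k : ℤ, (2:ℝ)^n * x.1 = k} ⊆
      ⋃ k : ℤ, ({((k:ℝ)/2^n)} ×ˢ (univ : Set ℝ)) := by
    rintro x ⟨k, hk⟩
    refine mem_iUnion.mpr ⟨k, ?_, trivial⟩
    simp only [mem_singleton_iff]
    field_simp
    linarith [hk]
  apply measure_mono_null hsub
  apply measure_iUnion_null
  intro k
  rw [show (volume : Measure (ℝ × ℝ)) = (volume : Measure ℝ).prod volume from rfl,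
    Measure.prod_prod, Real.volume_singleton, zero_mul]

end Aux4
section Aux5
open Set MeasureTheory

lemma qd_nonneg_real (x : ℝ × ℝ) (m : ℕ) :
    ∀ i : ℕ, 0 ≤ (qdigit (i+m+1) x : ℝ) / 4^(i+m+1) := by
  intro i
  apply div_nonneg
  · exact_mod_cast qdigit_nonneg (i+m) x
  · positivity

lemma tail_eq_zero (x : ℝ × ℝ) (n : ℕ)
    (h : ∑' j : ℕ, (qdigit (j+n+1) x : ℝ) / 4^(j+n+1) ≤ 0) :
    ∀ j : ℕ, qdigit (j+n+1) x = 0 := by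
  intro j
  have hs := summable_qd x n
  have hnn := qd_nonneg_real x n
  have hle := Summable.le_tsum hs j (fun i _ => hnn i)
  have h0 : (qdigit (j+n+1) x : ℝ) / 4^(j+n+1) = 0 := le_antisymm (hle.trans h) (hnn j)
  have h4 : ((4:ℝ)^(j+n+1)) ≠ 0 := by positivity
  rw [div_eq_zero_iff] at h0
  rcases h0 with h0 | h0
  · exact_mod_cast h0
  · exact absurd h0 h4

lemma tail_eq_top (x : ℝ × ℝ) (n : ℕ)
    (h : 1/4^n ≤ ∑' j : ℕ, (qdigit (j+n+1) x : ℝ) / 4^(j+n+1)) :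
    ∀ j : ℕ, qdigit (j+n+1) x = 3 := by
  intro j
  set g : ℕ → ℝ := fun i => (3:ℝ)/4^(i+n+1) - (qdigit (i+n+1) x : ℝ)/4^(i+n+1) with hg
  have hgs : Summable g := (summable_three n).sub (summable_qd x n)
  have htg : ∑' i, g i ≤ 0 := by
    rw [hg]
    rw [Summable.tsum_sub (summable_three n) (summable_qd x n), tsum_three n]
    linarith
  have hnn : ∀ i : ℕ, 0 ≤ g i := by
    intro i
    simp only [hg, sub_nonneg]
    apply div_le_div_of_nonneg_right ?_ (by positivity)
    exact_mod_cast qdigit_le_three (i+n) x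
  have hle := Summable.le_tsum hgs j (fun i _ => hnn i)
  have h0 : g j = 0 := le_antisymm (hle.trans htg) (hnn j)
  simp only [hg, sub_eq_zero] at h0
  have h4 : ((4:ℝ)^(j+n+1)) ≠ 0 := by positivity
  field_simp at h0
  exact_mod_cast h0.symm

lemma finsum_three (k n : ℕ) (h : k ≤ n) :
    ∑ j ∈ Finset.Ico k n, (3:ℝ)/4^(j+1) = 1/4^k - 1/4^n := by
  induction n, h using Nat.le_induction with
  | base => simp
  | succ n hkn ih =>
    rw [Finset.sum_Ico_succ_top hkn, ih, pow_succ]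
    have h1 : ((4:ℝ)^n) ≠ 0 := by positivity
    field_simp
    ring

lemma uFM_eq (x : ℝ × ℝ) (hx : x ∈ unitSq) (n : ℕ) :
    uFM x = (∑ j ∈ Finset.range n, (qdigit (j+1) x : ℝ)/4^(j+1))
      + ∑' j : ℕ, (qdigit (j+n+1) x : ℝ)/4^(j+n+1) := by
  have hsum : Summable (fun j : ℕ => (qdigit (j+1) x : ℝ)/4^(j+1)) := by
    simpa using summable_qd x 0
  rw [uFM, indicator_of_mem hx]
  exact (Summable.sum_add_tsum_nat_add n hsum).symm

end Aux5
section Main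
open Set MeasureTheory Finset

lemma band_subset (l : List (Fin 4)) (x : ℝ × ℝ)
    (hxu : x ∈ unitSq)
    (hlo : (∑ j : Fin l.length, ((l.get j).val : ℝ) / 4 ^ ((j : ℕ) + 1)) < uFM x)
    (hhi : uFM x < (∑ j : Fin l.length, ((l.get j).val : ℝ) / 4 ^ ((j : ℕ) + 1))
        + 1 / 4 ^ l.length) :
    x ∈ Qseq l := by
  classical
  set n := l.length with hn
  set L : ℕ → ℤ := fun j => if h : j < n then ((l.get ⟨j, h⟩).val : ℤ) else 0 with hL
  set f : ℕ → ℝ := fun j => (qdigit (j+1) x : ℝ)/4^(j+1) with hf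
  set g : ℕ → ℝ := fun j => (L j : ℝ)/4^(j+1) with hg
  have hs : (∑ j : Fin l.length, ((l.get j).val : ℝ) / 4 ^ ((j : ℕ) + 1))
      = ∑ j ∈ Finset.range n, g j := by
    rw [← Fin.sum_univ_eq_sum_range g n]
    apply Finset.sum_congr rfl
    intro j _
    have hj : (j : ℕ) < n := j.isLt
    simp [hg, hL, dif_pos hj]
  have hL0 : ∀ j, (0:ℤ) ≤ L j := by
    intro j; simp only [hL]; split
    · exact Int.natCast_nonneg _
    · exact le_refl 0
  have hL3 : ∀ j, L j ≤ 3 := by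
    intro j; simp only [hL]; split
    · next h => have := (l.get ⟨j, h⟩).isLt; omega
    · omega
  rw [mem_Qseq_iff]
  refine ⟨hxu, ?_⟩
  by_contra hcon
  push_neg at hcon
  obtain ⟨j0, hj0, hne0⟩ := hcon
  have hex : ∃ m, qdigit (m+1) x ≠ L m ∧ m < n := by
    refine ⟨j0, ?_, hj0⟩
    simpa [hL, hn, hj0] using hne0
  set k := Nat.find hex with hk
  obtain ⟨hkne, hkn⟩ := Nat.find_spec hex
  rw [← hk] at hkne hkn
  have hmin : ∀ m, m < k → qdigit (m+1) x = L m := by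
    intro m hm
    have hmn : m < n := lt_trans hm hkn
    rcases not_and_or.mp (Nat.find_min hex hm) with h | h
    · exact not_not.mp h
    · exact absurd hmn h
  -- sum splittings
  have hkn' : k + 1 ≤ n := hkn
  have hsplit : ∀ F : ℕ → ℝ, ∑ j ∈ Finset.range n, F j
      = ∑ j ∈ Finset.range k, F j + F k + ∑ j ∈ Finset.Ico (k+1) n, F j := by
    intro F
    rw [← Finset.sum_range_succ]
    exact (Finset.sum_range_add_sum_Ico F hkn').symm
  have hp4 : (0:ℝ) < 4^(k+1) := by positivity
  have hA1 : ∑ j ∈ Finset.Ico (k+1) n, f j ≤ 1/4^(k+1) - 1/4^n := by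
    rw [← finsum_three (k+1) n hkn']
    apply Finset.sum_le_sum
    intro i _
    apply div_le_div_of_nonneg_right ?_ (by positivity)
    exact_mod_cast qdigit_le_three i x
  have hA1' : (0:ℝ) ≤ ∑ j ∈ Finset.Ico (k+1) n, f j := by
    apply Finset.sum_nonneg
    intro i _
    apply div_nonneg ?_ (by positivity)
    exact_mod_cast qdigit_nonneg i x
  have hA2 : ∑ j ∈ Finset.Ico (k+1) n, g j ≤ 1/4^(k+1) - 1/4^n := by
    rw [← finsum_three (k+1) n hkn']
    apply Finset.sum_le_sum
    intro i _
    apply div_le_div_of_nonneg_right ?_ (by positivity)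
    exact_mod_cast hL3 i
  have hA2' : (0:ℝ) ≤ ∑ j ∈ Finset.Ico (k+1) n, g j := by
    apply Finset.sum_nonneg
    intro i _
    apply div_nonneg ?_ (by positivity)
    exact_mod_cast hL0 i
  have hA3 : ∑ j ∈ Finset.range k, f j = ∑ j ∈ Finset.range k, g j := by
    apply Finset.sum_congr rfl
    intro m hm
    rw [Finset.mem_range] at hm
    simp only [hf, hg, hmin m hm]
  have hu := uFM_eq x hxu n
  have hT0 := tail_nonneg x n
  have hT1 := tail_le x n
  rw [hs] at hlo hhi
  rw [hsplit f] at hu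
  rw [hsplit g] at hlo hhi
  rcases lt_or_gt_of_ne hkne with hlt | hgt
  · -- qdigit (k+1) x ≤ L k - 1 : u ≤ s, contradiction with hlo
    have hfk : f k ≤ g k - 1/4^(k+1) := by
      have hle : (qdigit (k+1) x : ℝ) ≤ (L k : ℝ) - 1 := by
        have : qdigit (k+1) x ≤ L k - 1 := by omega
        exact_mod_cast this
      simp only [hf, hg]
      calc (qdigit (k+1) x : ℝ)/4^(k+1) ≤ ((L k : ℝ) - 1)/4^(k+1) :=
            div_le_div_of_nonneg_right hle hp4.le
        _ = (L k : ℝ)/4^(k+1) - 1/4^(k+1) := by ring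
    linarith
  · -- L k + 1 ≤ qdigit (k+1) x : u ≥ s + 4^{-n}, contradiction with hhi
    have hfk : g k + 1/4^(k+1) ≤ f k := by
      have hle : (L k : ℝ) + 1 ≤ (qdigit (k+1) x : ℝ) := by
        have : L k + 1 ≤ qdigit (k+1) x := by omega
        exact_mod_cast this
      simp only [hf, hg]
      calc (L k : ℝ)/4^(k+1) + 1/4^(k+1) = ((L k : ℝ) + 1)/4^(k+1) := by ring
        _ ≤ (qdigit (k+1) x : ℝ)/4^(k+1) := div_le_div_of_nonneg_right hle hp4.le
    linarith

lemma Q_diff_band (l : List (Fin 4)) (x : ℝ × ℝ) (hx : x ∈ Qseq l)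
    (hnb : ¬ ((∑ j : Fin l.length, ((l.get j).val : ℝ) / 4 ^ ((j : ℕ) + 1)) < uFM x ∧
        uFM x < (∑ j : Fin l.length, ((l.get j).val : ℝ) / 4 ^ ((j : ℕ) + 1))
          + 1 / 4 ^ l.length)) :
    ∃ k : ℤ, (2:ℝ)^l.length * x.1 = k := by
  set n := l.length with hn
  obtain ⟨hxu, hd⟩ := (mem_Qseq_iff l x).mp hx
  have hs2 : (∑ j : Fin l.length, ((l.get j).val : ℝ) / 4 ^ ((j : ℕ) + 1))
      = ∑ j ∈ Finset.range n, (qdigit (j+1) x : ℝ)/4^(j+1) := by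
    rw [← Fin.sum_univ_eq_sum_range (fun j => (qdigit (j+1) x : ℝ)/4^(j+1)) n]
    apply Finset.sum_congr rfl
    intro j _
    rw [hd (j : ℕ) j.isLt]
    simp
  have hu := uFM_eq x hxu n
  have hT0 := tail_nonneg x n
  have hT1 := tail_le x n
  rcases not_and_or.mp hnb with h | h
  · push_neg at h
    rw [hs2] at h
    have hT : ∑' j : ℕ, (qdigit (j+n+1) x : ℝ)/4^(j+n+1) ≤ 0 := by linarith
    have hz := tail_eq_zero x n hT
    apply dyadic_of_zero x.1 n
    intro j
    have hq := hz j
    unfold qdigit at hq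
    have b1 := bdigit_cases (j+n) x.1
    have b2 := bdigit_cases (j+n) x.2
    rw [Nat.add_comm n j]
    omega
  · push_neg at h
    rw [hs2] at h
    have hT : 1/4^n ≤ ∑' j : ℕ, (qdigit (j+n+1) x : ℝ)/4^(j+n+1) := by linarith
    have hz := tail_eq_top x n hT
    apply dyadic_of_one x.1 n
    intro j
    have hq := hz j
    unfold qdigit at hq
    have b1 := bdigit_cases (j+n) x.1
    have b2 := bdigit_cases (j+n) x.2
    rw [Nat.add_comm n j]
    omega

end Main

/-- Item (iii) of the properties lemma: the open level band
`{ s < u < s + 4^{−n} }` of `u` at the dyadic value `s = Σ_{j=1}^{n} i_j 4^{−j}`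
coincides, up to a Lebesgue-null set, with the dyadic square `Q_{i₁,…,i_n}`. -/
theorem stmt12 (l : List (Fin 4)) (hl : 1 ≤ l.length) :
    volume (symmDiff
      {x : ℝ × ℝ | x ∈ unitSq ∧
        (∑ j : Fin l.length, ((l.get j).val : ℝ) / 4 ^ ((j : ℕ) + 1)) < uFM x ∧
        uFM x < (∑ j : Fin l.length, ((l.get j).val : ℝ) / 4 ^ ((j : ℕ) + 1))
          + 1 / 4 ^ l.length}
      (Qseq l)) = 0 := by
  apply measure_mono_null _ (null_dyadic l.length)
  intro x hx
  rw [Set.mem_symmDiff] at hx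
  rcases hx with ⟨hxB, hxQ⟩ | ⟨hxQ, hxB⟩
  · exact absurd (band_subset l x hxB.1 hxB.2.1 hxB.2.2) hxQ
  · exact Q_diff_band l x hxQ (fun hc => hxB ⟨Qseq_subset l hxQ, hc⟩)
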